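/- A topological space arising as the open-ball topology of a symmetric separated [0,∞]-continuity space (i.e., a metrizable space) is T0, regular, and admits a σ-discrete basis. -/

import Mathlib

/-- `wellAbove x y` means `y` is well above `x`: for every subset `S` with
`⨅ S ≤ x` there is `s₀ ∈ S` with `s₀ ≤ y`. (Written `x ≺ y`.) -/
def wellAbove {V : Type*} [CompleteLattice V] (x y : V) : Prop :=
  ∀ S : Set V, sInf S ≤ x → ∃ s ∈ S, s ≤ y
/-- A family of subsets of a topological space is discrete if every point has a
neighbourhood meeting at most one member of the family. -/
def IsDiscreteFamily {X : Type*} [TopologicalSpace X] (B : Set (Set X)) : Prop :=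
  ∀ x : X, ∃ N ∈ nhds x, {s ∈ B | (s ∩ N).Nonempty}.Subsingleton

open ENNReal Set

theorem wellAbove_iff_ennreal (a ε : ℝ≥0∞) : wellAbove a ε ↔ a < ε := by
  constructor
  · intro h
    have hle : sInf (Set.Ioi a) ≤ a := by
      by_contra hc
      obtain ⟨b, hab, hbs⟩ := exists_between (not_le.1 hc)
      exact absurd (sInf_le (show b ∈ Set.Ioi a from hab)) (not_le.2 hbs)
    rcases h (Set.Ioi a) hle with ⟨s, hs, hsε⟩
    exact lt_of_lt_of_le hs hsε
  · intro h S hS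
    obtain ⟨s, hsS, hs⟩ := sInf_lt_iff.mp (lt_of_le_of_lt hS h)
    exact ⟨s, hsS, hs.le⟩

namespace BNS

variable {X : Type*} [EMetricSpace X]

lemma half_sum (n : ℕ) : (2⁻¹ : ℝ≥0∞) ^ (n + 1) + 2⁻¹ ^ (n + 1) = 2⁻¹ ^ n := by
  have h1 : (2 : ℝ≥0∞) * 2⁻¹ = 1 := ENNReal.mul_inv_cancel two_ne_zero ofNat_ne_top
  rw [pow_succ, ← two_mul, ← mul_assoc, mul_comm (2:ℝ≥0∞), mul_assoc, h1, mul_one]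

lemma pow_pos' (n : ℕ) : (0 : ℝ≥0∞) < 2⁻¹ ^ n :=
  ENNReal.pow_pos (by norm_num) n

lemma pow_ne_top' (n : ℕ) : (2⁻¹ : ℝ≥0∞) ^ n ≠ ⊤ :=
  ENNReal.pow_ne_top (by norm_num)

def C (m n : ℕ) (a : X) : Set X :=
  {x | edist a x + 3 * (2⁻¹ : ℝ≥0∞) ^ n ≤ (2⁻¹ : ℝ≥0∞) ^ m ∧
    ∀ b, edist b x < (2⁻¹ : ℝ≥0∞) ^ m → ¬ WellOrderingRel b a}

def V (m n : ℕ) (a : X) : Set X := ⋃ x ∈ C m n a, EMetric.ball x ((2⁻¹ : ℝ≥0∞) ^ n)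

lemma isOpen_V (m n : ℕ) (a : X) : IsOpen (V m n a) :=
  isOpen_biUnion fun _ _ => EMetric.isOpen_ball

lemma key {m n : ℕ} {a b x y : X} (hab : WellOrderingRel a b)
    (hx : x ∈ C m n a) (hy : y ∈ C m n b) :
    3 * (2⁻¹ : ℝ≥0∞) ^ n ≤ edist x y := by
  have h1 : (2⁻¹ : ℝ≥0∞) ^ m ≤ edist a y := not_lt.1 fun h => hy.2 a h hab
  have h2 : edist a y ≤ edist a x + edist x y := edist_triangle _ _ _
  have h3 : edist a x + 3 * (2⁻¹ : ℝ≥0∞) ^ n ≤ edist a x + edist x y :=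
    le_trans hx.1 (le_trans h1 h2)
  have hfin : edist a x ≠ ⊤ :=
    ne_top_of_le_ne_top (pow_ne_top' m) (le_self_add.trans hx.1)
  exact (ENNReal.add_le_add_iff_left hfin).1 h3

lemma discrete (m n : ℕ) : IsDiscreteFamily (Set.range (V (X := X) m n)) := by
  intro z
  refine ⟨EMetric.ball z ((2⁻¹ : ℝ≥0∞) ^ (n + 1)),
    EMetric.ball_mem_nhds _ (pow_pos' (n + 1)), ?_⟩
  rintro s ⟨⟨a, rfl⟩, p, hpV, hpN⟩ u ⟨⟨b, rfl⟩, q, hqV, hqN⟩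
  obtain ⟨xa, hxa, hpb⟩ := mem_iUnion₂.1 hpV
  obtain ⟨xb, hxb, hqb⟩ := mem_iUnion₂.1 hqV
  have hlt : edist xa xb < 3 * (2⁻¹ : ℝ≥0∞) ^ n := by
    have h1 : edist xa p < (2⁻¹ : ℝ≥0∞) ^ n := by
      rw [edist_comm]; exact EMetric.mem_ball.1 hpb
    have h2 : edist p z < (2⁻¹ : ℝ≥0∞) ^ (n + 1) := EMetric.mem_ball.1 hpN
    have h3 : edist z q < (2⁻¹ : ℝ≥0∞) ^ (n + 1) := by
      rw [edist_comm]; exact EMetric.mem_ball.1 hqN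
    have h4 : edist q xb < (2⁻¹ : ℝ≥0∞) ^ n := EMetric.mem_ball.1 hqb
    calc edist xa xb ≤ edist xa z + edist z xb := edist_triangle _ _ _
      _ ≤ (edist xa p + edist p z) + (edist z q + edist q xb) :=
        add_le_add (edist_triangle _ _ _) (edist_triangle _ _ _)
      _ < ((2⁻¹:ℝ≥0∞) ^ n + 2⁻¹ ^ (n+1)) + (2⁻¹ ^ (n+1) + 2⁻¹ ^ n) :=
        ENNReal.add_lt_add (ENNReal.add_lt_add h1 h2) (ENNReal.add_lt_add h3 h4)
      _ = 3 * (2⁻¹:ℝ≥0∞) ^ n := by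
        have h2 : (2⁻¹:ℝ≥0∞) ^ n = 2 * 2⁻¹ ^ (n+1) := by
          rw [pow_succ, ← mul_assoc, mul_comm (2:ℝ≥0∞),  mul_assoc,
            ENNReal.mul_inv_cancel two_ne_zero ofNat_ne_top, mul_one]
        rw [h2]; ring
  rcases trichotomous_of WellOrderingRel a b with hab | rfl | hba
  · exact absurd (key hab hxa hxb) (not_le.2 hlt)
  · rfl
  · rw [edist_comm] at hlt
    exact absurd (key hba hxb hxa) (not_le.2 hlt)

theorem exists_sigma_discrete_basis (X : Type*) [EMetricSpace X] :
    ∃ B : ℕ → Set (Set X), (∀ k, IsDiscreteFamily (B k)) ∧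
      TopologicalSpace.IsTopologicalBasis (⋃ k, B k) := by
  refine ⟨fun k => Set.range (V (X := X) k.unpair.1 k.unpair.2),
    fun k => discrete _ _, ?_⟩
  refine TopologicalSpace.isTopologicalBasis_of_isOpen_of_nhds ?_ ?_
  · rintro u hu
    simp only [mem_iUnion, mem_range] at hu
    obtain ⟨k, a, rfl⟩ := hu
    exact isOpen_V _ _ _
  · intro x U hxU hU
    obtain ⟨ε, hε, hball⟩ := EMetric.isOpen_iff.1 hU x hxU
    obtain ⟨m, hm⟩ := ENNReal.exists_inv_two_pow_lt hε.ne'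
    set S : Set X := {b | edist b x < (2⁻¹:ℝ≥0∞) ^ (m + 1)} with hSdef
    have hxS : x ∈ S := by
      simp only [hSdef, mem_setOf_eq, edist_self]; exact pow_pos' (m + 1)
    set a := (IsWellFounded.wf (r := WellOrderingRel (α := X))).min S ⟨x, hxS⟩ with ha
    have haS : a ∈ S := WellFounded.min_mem _ _ _
    have hmin : ∀ b, edist b x < (2⁻¹:ℝ≥0∞) ^ (m + 1) → ¬ WellOrderingRel b a :=
      fun b hb => WellFounded.not_lt_min _ S (show b ∈ S from hb)
    have hlt : edist a x < (2⁻¹:ℝ≥0∞) ^ (m + 1) := haS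
    -- choose n with edist a x + 3 * 2⁻¹ ^ n ≤ 2⁻¹ ^ (m+1)
    have hd0 : ((2⁻¹:ℝ≥0∞) ^ (m + 1) - edist a x) / 3 ≠ 0 := by
      rw [Ne, ENNReal.div_eq_zero_iff]
      push_neg
      exact ⟨tsub_pos_of_lt hlt |>.ne', by norm_num⟩
    obtain ⟨n, hn⟩ := ENNReal.exists_inv_two_pow_lt hd0
    have hxC : x ∈ C (m + 1) n a := by
      constructor
      · have h3 : 3 * (2⁻¹:ℝ≥0∞) ^ n ≤ (2⁻¹:ℝ≥0∞) ^ (m + 1) - edist a x := by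
          calc 3 * (2⁻¹:ℝ≥0∞) ^ n ≤ 3 * (((2⁻¹:ℝ≥0∞) ^ (m + 1) - edist a x) / 3) :=
              by gcongr
            _ = (2⁻¹:ℝ≥0∞) ^ (m + 1) - edist a x :=
              ENNReal.mul_div_cancel' (by norm_num) (by norm_num)
        calc edist a x + 3 * (2⁻¹:ℝ≥0∞) ^ n
            ≤ edist a x + ((2⁻¹:ℝ≥0∞) ^ (m + 1) - edist a x) := add_le_add_right h3 _
          _ = (2⁻¹:ℝ≥0∞) ^ (m + 1) := add_tsub_cancel_of_le hlt.le
      · exact hmin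
    have hxV : x ∈ V (m + 1) n a :=
      mem_iUnion₂.2 ⟨x, hxC, EMetric.mem_ball_self (pow_pos' n)⟩
    have hVsub : V (m + 1) n a ⊆ U := by
      intro y hy
      obtain ⟨x', hx'C, hy'⟩ := mem_iUnion₂.1 hy
      apply hball
      have h1 : edist y x' + edist x' a ≤ (2⁻¹:ℝ≥0∞) ^ (m + 1) := by
        have hy1 : edist y x' ≤ (2⁻¹:ℝ≥0∞) ^ n := (EMetric.mem_ball.1 hy').le
        have h13 : (2⁻¹:ℝ≥0∞) ^ n ≤ 3 * (2⁻¹:ℝ≥0∞) ^ n :=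
          le_mul_of_one_le_left zero_le (by norm_num)
        calc edist y x' + edist x' a ≤ 3 * (2⁻¹:ℝ≥0∞) ^ n + edist a x' := by
              rw [edist_comm x' a]; exact add_le_add_left (hy1.trans h13) _
          _ = edist a x' + 3 * (2⁻¹:ℝ≥0∞) ^ n := add_comm _ _
          _ ≤ (2⁻¹:ℝ≥0∞) ^ (m + 1) := hx'C.1
      have : edist y x < (2⁻¹:ℝ≥0∞) ^ (m + 1) + (2⁻¹:ℝ≥0∞) ^ (m + 1) := by
        calc edist y x ≤ (edist y x' + edist x' a) + edist a x := by
              calc edist y x ≤ edist y a + edist a x := edist_triangle _ _ _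
                _ ≤ (edist y x' + edist x' a) + edist a x :=
                  add_le_add_left (edist_triangle _ _ _) _
          _ < (2⁻¹:ℝ≥0∞) ^ (m + 1) + (2⁻¹:ℝ≥0∞) ^ (m + 1) :=
            ENNReal.add_lt_add_of_le_of_lt
              (ne_top_of_le_ne_top (pow_ne_top' (m+1)) h1) h1 hlt
      rw [half_sum] at this
      exact EMetric.mem_ball.2 (this.trans hm)
    refine ⟨V (m + 1) n a, ?_, hxV, hVsub⟩
    refine mem_iUnion.2 ⟨Nat.pair (m + 1) n, ?_⟩
    simp only [Nat.unpair_pair]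
    exact mem_range_self a

end BNS

open ENNReal in
theorem metrizable_is_T0_regular_sigma_discrete_basis
    {X : Type*} [t : TopologicalSpace X] (d : X → X → ℝ≥0∞)
    (d_self : ∀ x, d x x = 0)
    (d_triangle : ∀ x y z, d x z ≤ d x y + d y z)
    (d_symm : ∀ x y, d x y = d y x)
    (d_sep : ∀ x y, d x y = 0 → d y x = 0 → x = y)
    (ht : ∀ U : Set X, IsOpen U ↔ ∀ x ∈ U, ∃ ε : ℝ≥0∞, wellAbove 0 ε ∧
      {y : X | wellAbove (d x y) ε} ⊆ U) :
    T0Space X ∧ RegularSpace X ∧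
      ∃ B : ℕ → Set (Set X), (∀ n, IsDiscreteFamily (B n)) ∧
        TopologicalSpace.IsTopologicalBasis (⋃ n, B n) := by
  letI E : EMetricSpace X :=
    { edist := d
      edist_self := d_self
      edist_comm := d_symm
      edist_triangle := d_triangle
      eq_of_edist_eq_zero := fun {x y} h => d_sep x y h (by rw [d_symm]; exact h) }
  have heq : t = E.toUniformSpace.toTopologicalSpace := by
    refine TopologicalSpace.ext_iff.2 fun U => ?_
    rw [ht U, EMetric.isOpen_iff]
    refine forall₂_congr fun x hx => ?_
    constructor
    · rintro ⟨ε, hε0, hsub⟩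
      refine ⟨ε, (wellAbove_iff_ennreal 0 ε).1 hε0, fun y hy => hsub ?_⟩
      refine (wellAbove_iff_ennreal (d x y) ε).2 ?_
      rw [d_symm]
      exact EMetric.mem_ball.1 hy
    · rintro ⟨ε, hε0, hsub⟩
      refine ⟨ε, (wellAbove_iff_ennreal 0 ε).2 hε0, fun y hy => hsub ?_⟩
      refine EMetric.mem_ball.2 ?_
      have := (wellAbove_iff_ennreal (d x y) ε).1 hy
      rwa [d_symm] at this
  subst heq
  exact ⟨inferInstance, inferInstance, BNS.exists_sigma_discrete_basis X⟩
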